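/- Suppose a bridge assumption holds: conditional on the history and on the event G_t that some offspring at iteration t lands in a fixed measurable set A, a success event B_t occurs with conditional probability at least ρ ∈ (0,1]. Then P(B_t | H_t) ≥ ρ·P(G_t | H_t), and consequently the probability that B_t fails at every iteration t ≤ T is at most ∏_{t=1}^T (1 − ρ·[1−(1−α·π₀(A))^{n_t}]). -/

import Mathlib

open MeasureTheory

/-- under the bridge assumption (conditional on the history H t and
the sampled-good event G t, the success event B t occurs with conditional
probability at least ρ, a.s. on G t), we get
P(B t | H t) ≥ ρ · P(G t | H t), and consequently the probability that B t fails
at every iteration t < T is at most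
∏_{t<T} (1 - ρ·[1 - (1 - α·π₀ A)^(n t)]). -/
theorem stmt10 {Ω Z : Type*} {mΩ : MeasurableSpace Ω} {mZ : MeasurableSpace Z}
    (μ : Measure Ω) [IsProbabilityMeasure μ]
    (π₀ : Measure Z) [IsProbabilityMeasure π₀]
    (A : Set Z) (hA : MeasurableSet A)
    (H : ℕ → MeasurableSpace Ω) (hHmono : Monotone H) (hHle : ∀ t, H t ≤ mΩ)
    (G B : ℕ → Set Ω)
    (hG : ∀ t, MeasurableSet (G t)) (hBmeas : ∀ t, MeasurableSet (B t))
    (hBadapt : ∀ t, MeasurableSet[H (t + 1)] (B t))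
    (n : ℕ → ℕ) (α ρ : ℝ) (hα : 0 < α) (hρ0 : 0 < ρ) (hρ1 : ρ ≤ 1)
    (hbridge : ∀ t, ∀ᵐ ω ∂μ, ω ∈ G t →
      ρ ≤ (μ[Set.indicator (B t) (fun _ => (1 : ℝ)) |
            H t ⊔ MeasurableSpace.generateFrom {G t}]) ω)
    (hsample : ∀ t, ∀ᵐ ω ∂μ,
      1 - (1 - α * (π₀ A).toReal) ^ (n t) ≤
        (μ[Set.indicator (G t) (fun _ => (1 : ℝ)) | H t]) ω) :
    (∀ t, ∀ᵐ ω ∂μ,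
      ρ * (μ[Set.indicator (G t) (fun _ => (1 : ℝ)) | H t]) ω ≤
        (μ[Set.indicator (B t) (fun _ => (1 : ℝ)) | H t]) ω) ∧
    ∀ T, μ (⋂ t ∈ Finset.range T, (B t)ᶜ) ≤
      ENNReal.ofReal (∏ t ∈ Finset.range T,
        (1 - ρ * (1 - (1 - α * (π₀ A).toReal) ^ (n t)))) := by
  have hintB : ∀ t, Integrable (Set.indicator (B t) (fun _ => (1:ℝ))) μ :=
    fun t => (integrable_const 1).indicator (hBmeas t)
  have hintG : ∀ t, Integrable (Set.indicator (G t) (fun _ => (1:ℝ))) μ :=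
    fun t => (integrable_const 1).indicator (hG t)
  -- Part 1
  have key : ∀ t, ∀ᵐ ω ∂μ,
      ρ * (μ[Set.indicator (G t) (fun _ => (1 : ℝ)) | H t]) ω ≤
        (μ[Set.indicator (B t) (fun _ => (1 : ℝ)) | H t]) ω := by
    intro t
    set m' := H t ⊔ MeasurableSpace.generateFrom {G t} with hm'def
    have hm'le : m' ≤ mΩ := by
      refine sup_le (hHle t) (MeasurableSpace.generateFrom_le ?_)
      rintro s hs
      rw [Set.mem_singleton_iff] at hs
      subst hs
      exact hG t
    have hnn : 0 ≤ᵐ[μ] μ[Set.indicator (B t) (fun _ => (1:ℝ))|m'] :=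
      condExp_nonneg (ae_of_all _ fun ω =>
        Set.indicator_nonneg (fun _ _ => zero_le_one) ω)
    have h1 : (fun ω => ρ * Set.indicator (G t) (fun _ => (1:ℝ)) ω)
        ≤ᵐ[μ] μ[Set.indicator (B t) (fun _ => (1:ℝ))|m'] := by
      filter_upwards [hbridge t, hnn] with ω hb hn
      by_cases hω : ω ∈ G t
      · rw [Set.indicator_of_mem hω, mul_one]; exact hb hω
      · rw [Set.indicator_of_notMem hω, mul_zero]; simpa using hn
    have h2 := condExp_mono (m := H t) (μ := μ)
      ((hintG t).const_mul ρ) integrable_condExp h1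
    have h3 : μ[μ[Set.indicator (B t) (fun _ => (1:ℝ))|m']|H t]
        =ᵐ[μ] μ[Set.indicator (B t) (fun _ => (1:ℝ))|H t] :=
      condExp_condExp_of_le le_sup_left hm'le
    have h4 : μ[(fun ω => ρ * Set.indicator (G t) (fun _ => (1:ℝ)) ω)|H t]
        =ᵐ[μ] fun ω => ρ * (μ[Set.indicator (G t) (fun _ => (1:ℝ))|H t]) ω := by
      have he : (fun ω => ρ * Set.indicator (G t) (fun _ => (1:ℝ)) ω)
          = ρ • Set.indicator (G t) (fun _ => (1:ℝ)) := by
        funext ω; simp [smul_eq_mul]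
      rw [he]
      filter_upwards [condExp_smul (μ := μ) (m := H t) ρ
        (Set.indicator (G t) (fun _ => (1:ℝ)))] with ω hω
      simpa [smul_eq_mul] using hω
    filter_upwards [h2, h3, h4] with ω h2 h3 h4
    calc ρ * (μ[Set.indicator (G t) (fun _ => (1:ℝ))|H t]) ω
        = (μ[(fun ω => ρ * Set.indicator (G t) (fun _ => (1:ℝ)) ω)|H t]) ω := h4.symm
      _ ≤ (μ[μ[Set.indicator (B t) (fun _ => (1:ℝ))|m']|H t]) ω := h2
      _ = (μ[Set.indicator (B t) (fun _ => (1:ℝ))|H t]) ω := h3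
  refine ⟨key, ?_⟩
  -- q t ≤ 1
  haveI : (ae μ).NeBot := ae_neBot.mpr (IsProbabilityMeasure.ne_zero μ)
  have hq1 : ∀ t, 1 - (1 - α * (π₀ A).toReal) ^ (n t) ≤ 1 := by
    intro t
    have hle1 : μ[Set.indicator (G t) (fun _ => (1:ℝ))|H t] ≤ᵐ[μ] fun _ => 1 := by
      have := condExp_mono (m := H t) (μ := μ) (hintG t) (integrable_const 1)
        (ae_of_all _ fun ω => Set.indicator_le_self' (fun _ _ => zero_le_one) ω)
      rwa [condExp_const (hHle t)] at this
    obtain ⟨ω, h1, h2⟩ := ((hsample t).and hle1).exists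
    exact h1.trans h2
  intro T
  induction T with
  | zero => simp
  | succ T ih =>
    set q := 1 - (1 - α * (π₀ A).toReal) ^ (n T) with hqdef
    have hc0 : 0 ≤ 1 - ρ * q := by
      rcases le_or_gt q 0 with h | h
      · nlinarith
      · nlinarith [mul_le_mul hρ1 (hq1 T) h.le zero_le_one]
    set S := ⋂ t ∈ Finset.range T, (B t)ᶜ with hSdef
    have hS : MeasurableSet[H T] S := by
      refine MeasurableSet.biInter (Finset.range T).countable_toSet ?_
      intro t ht
      exact hHmono (Nat.succ_le_of_lt (Finset.mem_range.mp (Finset.mem_coe.mp ht)))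
        _ ((hBadapt t).compl)
    have hSm : MeasurableSet S := hHle T _ hS
    -- conditional bound
    have hbound : μ[Set.indicator (B T)ᶜ (fun _ => (1:ℝ))|H T]
        ≤ᵐ[μ] fun _ => 1 - ρ * q := by
      have heq : Set.indicator (B T)ᶜ (fun _ => (1:ℝ))
          = (fun _ => (1:ℝ)) - Set.indicator (B T) (fun _ => (1:ℝ)) := by
        funext ω; by_cases h : ω ∈ B T <;> simp [h]
      have hsub := condExp_sub (m := H T) (μ := μ)
        (integrable_const (1:ℝ)) (hintB T)
      rw [condExp_const (hHle T)] at hsub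
      filter_upwards [hsub, key T, hsample T] with ω h1 h2 h3
      have : (μ[Set.indicator (B T)ᶜ (fun _ => (1:ℝ))|H T]) ω
          = 1 - (μ[Set.indicator (B T) (fun _ => (1:ℝ))|H T]) ω := by
        rw [heq]; simpa using h1
      rw [this]
      have h5 := mul_le_mul_of_nonneg_left h3 hρ0.le
      rw [← hqdef] at h5
      linarith
    have hIc : Integrable (Set.indicator (B T)ᶜ (fun _ => (1:ℝ))) μ :=
      (integrable_const 1).indicator (hBmeas T).compl
    have step1 : (μ (S ∩ (B T)ᶜ)).toReal ≤ (1 - ρ * q) * (μ S).toReal := by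
      have h1 : ∫ ω in S, Set.indicator (B T)ᶜ (fun _ => (1:ℝ)) ω ∂μ
          = (μ (S ∩ (B T)ᶜ)).toReal := by
        rw [setIntegral_indicator (hBmeas T).compl]
        simp [measureReal_def]
      have h2 : ∫ ω in S, (μ[Set.indicator (B T)ᶜ (fun _ => (1:ℝ))|H T]) ω ∂μ
          = (μ (S ∩ (B T)ᶜ)).toReal := by
        rw [setIntegral_condExp (hHle T) hIc hS, h1]
      have h3 : ∫ ω in S, (μ[Set.indicator (B T)ᶜ (fun _ => (1:ℝ))|H T]) ω ∂μ
          ≤ ∫ _ in S, (1 - ρ * q) ∂μ := by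
        refine integral_mono_ae integrable_condExp.integrableOn
          (integrableOn_const (measure_ne_top μ S)) ?_
        exact ae_restrict_of_ae hbound
      rw [h2] at h3
      simpa [mul_comm, measureReal_def] using h3
    calc μ (⋂ t ∈ Finset.range (T + 1), (B t)ᶜ)
        = μ (S ∩ (B T)ᶜ) := by
          rw [Finset.range_add_one, Finset.set_biInter_insert, Set.inter_comm]
      _ = ENNReal.ofReal ((μ (S ∩ (B T)ᶜ)).toReal) :=
          (ENNReal.ofReal_toReal (measure_ne_top μ _)).symm
      _ ≤ ENNReal.ofReal ((1 - ρ * q) * (μ S).toReal) :=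
          ENNReal.ofReal_le_ofReal step1
      _ = ENNReal.ofReal (1 - ρ * q) * μ S := by
          rw [ENNReal.ofReal_mul hc0, ENNReal.ofReal_toReal (measure_ne_top μ _)]
      _ ≤ ENNReal.ofReal (1 - ρ * q) *
          ENNReal.ofReal (∏ t ∈ Finset.range T,
            (1 - ρ * (1 - (1 - α * (π₀ A).toReal) ^ (n t)))) :=
          mul_le_mul_right ih _
      _ = ENNReal.ofReal (∏ t ∈ Finset.range (T + 1),
            (1 - ρ * (1 - (1 - α * (π₀ A).toReal) ^ (n t)))) := by
          rw [Finset.prod_range_succ, ← ENNReal.ofReal_mul hc0, mul_comm]
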